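/- For every integer l ≥ 0 and every t > 0, the function P(t) := t^{1/2+l}·∫_ℝ exp(-2πt(y - i/t)²)·(iy-1)^{2l} dy equals ∫_ℝ exp(-2πy²)·(iy - (t^{-1/2} + t^{1/2}))^{2l} dy, and in particular P(t) = P(1/t). -/

import Mathlib

open MeasureTheory Real

noncomputable section

lemma int_pow_gauss {b : ℝ} (hb : 0 < b) (k : ℕ) :
    Integrable (fun x : ℝ => |x| ^ k * Real.exp (-b * x ^ 2)) := by
  have h := (integrable_rpow_mul_exp_neg_mul_sq hb
      (show (-1 : ℝ) < (k : ℝ) by exact neg_one_lt_zero.trans_le (Nat.cast_nonneg k))).abs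
  refine h.congr ?_
  filter_upwards with x
  rw [abs_mul, Real.rpow_natCast, abs_pow, _root_.abs_of_nonneg (Real.exp_pos _).le]

lemma int_polygauss {b : ℝ} (hb : 0 < b) (R : ℝ) (n : ℕ) :
    Integrable (fun x : ℝ => (|x| + R) ^ n * Real.exp (-b * x ^ 2)) := by
  have h : ∀ x : ℝ, (|x| + R) ^ n * Real.exp (-b * x ^ 2) =
      ∑ k ∈ Finset.range (n + 1),
        (|x| ^ k * Real.exp (-b * x ^ 2)) * (R ^ (n - k) * (n.choose k : ℝ)) := by
    intro x
    rw [add_pow, Finset.sum_mul]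
    congr 1; ext k; ring
  simp_rw [h]
  exact integrable_finset_sum _ fun k _ => (int_pow_gauss hb k).mul_const _

/-- The integrand. -/
def gI (b : ℝ) (w c : ℂ) (n : ℕ) (x : ℝ) : ℂ :=
  Complex.exp (-(b : ℂ) * ((x : ℂ) + w) ^ 2) * ((x : ℂ) + w + c) ^ n

/-- The shifted Gaussian-polynomial integral. -/
def AI (b : ℝ) (w c : ℂ) (n : ℕ) : ℂ := ∫ x : ℝ, gI b w c n x

lemma gI_cont (b : ℝ) (w c : ℂ) (n : ℕ) : Continuous (gI b w c n) := by
  unfold gI; fun_prop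

lemma norm_gI_le (b : ℝ) (hb : 0 < b) (w c : ℂ) (n : ℕ) (x : ℝ) :
    ‖gI b w c n x‖ ≤ Real.exp (b * (w.re ^ 2 + w.im ^ 2)) *
      ((|x| + ‖w + c‖) ^ n * Real.exp (-(b / 2) * x ^ 2)) := by
  unfold gI
  rw [norm_mul, norm_pow, Complex.norm_exp]
  have hre : (-(b : ℂ) * ((x : ℂ) + w) ^ 2).re = -b * ((x + w.re) ^ 2 - w.im ^ 2) := by
    simp only [Complex.mul_re, Complex.add_re, Complex.add_im, pow_two, Complex.neg_re,
      Complex.neg_im, Complex.ofReal_re, Complex.ofReal_im, Complex.mul_im]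
    ring
  have h1 : Real.exp ((-(b : ℂ) * ((x : ℂ) + w) ^ 2).re) ≤
      Real.exp (b * (w.re ^ 2 + w.im ^ 2)) * Real.exp (-(b / 2) * x ^ 2) := by
    rw [← Real.exp_add, Real.exp_le_exp, hre]
    nlinarith [sq_nonneg (x + 2 * w.re), sq_nonneg x, hb]
  have h2 : ‖(x : ℂ) + w + c‖ ≤ |x| + ‖w + c‖ := by
    rw [add_assoc]
    calc ‖(x : ℂ) + (w + c)‖ ≤ ‖(x : ℂ)‖ + ‖w + c‖ := norm_add_le _ _
      _ = |x| + ‖w + c‖ := by rw [Complex.norm_real, Real.norm_eq_abs]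
  calc Real.exp ((-(b : ℂ) * ((x : ℂ) + w) ^ 2).re) * ‖(x : ℂ) + w + c‖ ^ n
      ≤ (Real.exp (b * (w.re ^ 2 + w.im ^ 2)) * Real.exp (-(b / 2) * x ^ 2)) *
        (|x| + ‖w + c‖) ^ n := by
        apply mul_le_mul h1 (pow_le_pow_left₀ (norm_nonneg _) h2 n) (by positivity) (by positivity)
    _ = _ := by ring

lemma gI_integrable {b : ℝ} (hb : 0 < b) (w c : ℂ) (n : ℕ) :
    Integrable (gI b w c n) := by
  refine Integrable.mono' (((int_polygauss (by linarith : (0:ℝ) < b/2) ‖w + c‖ n).const_mul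
      (Real.exp (b * (w.re ^ 2 + w.im ^ 2)))))
    ((gI_cont b w c n).aestronglyMeasurable) ?_
  filter_upwards with x
  exact norm_gI_le b hb w c n x

lemma gI_hasDerivAt (b : ℝ) (w c : ℂ) (n : ℕ) (x : ℝ) :
    HasDerivAt (gI b w c n)
      (Complex.exp (-(b : ℂ) * ((x : ℂ) + w) ^ 2) *
        ((-2 * b * ((x : ℂ) + w)) * ((x : ℂ) + w + c) ^ n +
          n * ((x : ℂ) + w + c) ^ (n - 1))) x := by
  have key : ∀ z : ℂ, HasDerivAt
      (fun z : ℂ => Complex.exp (-(b : ℂ) * (z + w) ^ 2) * (z + w + c) ^ n)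
      (Complex.exp (-(b : ℂ) * (z + w) ^ 2) *
        ((-2 * b * (z + w)) * (z + w + c) ^ n + n * (z + w + c) ^ (n - 1))) z := by
    intro z
    have h1 : HasDerivAt (fun z : ℂ => z + w) 1 z := (hasDerivAt_id z).add_const w
    have h2 : HasDerivAt (fun z : ℂ => -(b : ℂ) * (z + w) ^ 2) (-2 * b * (z + w)) z := by
      have := ((h1.fun_pow 2).const_mul (-(b : ℂ)))
      exact this.congr_deriv (by push_cast; ring)
    have h3 : HasDerivAt (fun z : ℂ => Complex.exp (-(b : ℂ) * (z + w) ^ 2))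
        (Complex.exp (-(b : ℂ) * (z + w) ^ 2) * (-2 * b * (z + w))) z := h2.cexp
    have h4 : HasDerivAt (fun z : ℂ => (z + w + c) ^ n)
        (n * (z + w + c) ^ (n - 1)) z := by
      have h1' : HasDerivAt (fun z : ℂ => z + w + c) 1 z := by
        simpa [add_assoc] using (hasDerivAt_id z).add_const (w + c)
      simpa using h1'.fun_pow n
    have := h3.fun_mul h4
    exact this.congr_deriv (by ring)
  exact (key x).comp_ofReal

lemma gI_rec {b : ℝ} (hb : 0 < b) (w c : ℂ) (n : ℕ) :
    AI b w c (n + 1) = c * AI b w c n + ((n : ℂ) / (2 * b)) * AI b w c (n - 1) := by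
  set f' : ℝ → ℂ := fun x => Complex.exp (-(b : ℂ) * ((x : ℂ) + w) ^ 2) *
      ((-2 * b * ((x : ℂ) + w)) * ((x : ℂ) + w + c) ^ n +
        n * ((x : ℂ) + w + c) ^ (n - 1)) with hf'def
  have hpt : f' = fun x : ℝ => (-2 * b : ℂ) * gI b w c (n + 1) x +
      (2 * b * c) * gI b w c n x + (n : ℂ) * gI b w c (n - 1) x := by
    funext x
    simp only [hf'def, gI, pow_succ]
    ring
  have hint : Integrable f' := by
    rw [hpt]
    exact (((gI_integrable hb w c (n + 1)).const_mul _).add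
      ((gI_integrable hb w c n).const_mul _)).add ((gI_integrable hb w c (n - 1)).const_mul _)
  have hzero : ∫ x : ℝ, f' x = 0 :=
    integral_eq_zero_of_hasDerivAt_of_integrable (gI_hasDerivAt b w c n) hint
      (gI_integrable hb w c n)
  rw [hpt] at hzero
  have h1 : Integrable (fun x : ℝ => (-2 * b : ℂ) * gI b w c (n + 1) x) :=
    (gI_integrable hb w c (n + 1)).const_mul _
  have h2 : Integrable (fun x : ℝ => (2 * b * c : ℂ) * gI b w c n x) :=
    (gI_integrable hb w c n).const_mul _
  have h3 : Integrable (fun x : ℝ => (n : ℂ) * gI b w c (n - 1) x) :=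
    (gI_integrable hb w c (n - 1)).const_mul _
  have h12 : Integrable (fun x : ℝ =>
      (-2 * b : ℂ) * gI b w c (n + 1) x + (2 * b * c : ℂ) * gI b w c n x) := h1.add h2
  rw [integral_add h12 h3, integral_add h1 h2,
    integral_const_mul, integral_const_mul, integral_const_mul] at hzero
  have hz : (-2 * b : ℂ) * AI b w c (n + 1) + (2 * b * c) * AI b w c n
      + (n : ℂ) * AI b w c (n - 1) = 0 := hzero
  have hb' : (2 * (b : ℂ)) ≠ 0 := by
    simp only [ne_eq, mul_eq_zero, OfNat.ofNat_ne_zero, Complex.ofReal_eq_zero, false_or]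
    exact hb.ne'
  have h2b : (2 * (b : ℂ)) * (((n : ℂ) / (2 * b)) * AI b w c (n - 1))
      = (n : ℂ) * AI b w c (n - 1) := by
    field_simp
    rw [mul_assoc, mul_div_cancel_left₀ _ (by exact_mod_cast hb.ne')]
  have key : (2 * (b : ℂ)) * AI b w c (n + 1)
      = (2 * (b : ℂ)) * (c * AI b w c n + ((n : ℂ) / (2 * b)) * AI b w c (n - 1)) := by
    rw [mul_add, h2b]
    linear_combination (-1 : ℂ) * hz
  exact mul_left_cancel₀ hb' key

lemma gI_base {b : ℝ} (hb : 0 < b) (w c : ℂ) :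
    AI b w c 0 = ((π : ℂ) / b) ^ (1 / 2 : ℂ) := by
  have hb' : (-(b : ℂ)).re < 0 := by simpa using hb
  have h : ∀ x : ℝ, gI b w c 0 x =
      Complex.exp ((-(b : ℂ)) * (x : ℂ) ^ 2 + (-2 * b * w) * x + (-(b : ℂ) * w ^ 2)) := by
    intro x
    simp only [gI, pow_zero, mul_one]
    congr 1
    ring
  unfold AI
  simp_rw [h]
  rw [integral_cexp_quadratic hb' _ _]
  have hzero : -(b : ℂ) * w ^ 2 - (-2 * b * w) ^ 2 / (4 * -(b : ℂ)) = 0 := by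
    have : (b : ℂ) ≠ 0 := by exact_mod_cast hb.ne'
    field_simp
    ring
  rw [hzero, neg_neg, Complex.exp_zero, mul_one]

lemma gI_indep {b : ℝ} (hb : 0 < b) (c : ℂ) :
    ∀ (n : ℕ) (w : ℂ), AI b w c n = AI b 0 c n := by
  intro n
  induction n using Nat.strong_induction_on with
  | _ n ih =>
    cases n with
    | zero => intro w; rw [gI_base hb w c, gI_base hb 0 c]
    | succ m =>
      intro w
      rw [gI_rec hb w c m, gI_rec hb 0 c m, ih m (by omega), ih (m - 1) (by omega)]

end

/-- `P(t) = t^{1/2+l} ∫_ℝ e^{-2πt(y - i/t)²} (iy - 1)^{2l} dy`. -/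
noncomputable def Pfun (l : ℕ) (t : ℝ) : ℂ :=
  (t : ℂ) ^ ((1 : ℂ) / 2 + l) *
    ∫ y : ℝ,
      Complex.exp (-2 * π * t * ((y : ℂ) - Complex.I / t) ^ 2) *
        (Complex.I * y - 1) ^ (2 * l)

lemma Pfun_eq (l : ℕ) {t : ℝ} (ht : 0 < t) :
    Pfun l t = ∫ y : ℝ, Complex.exp (-2 * π * y ^ 2) *
      (Complex.I * y - (((Real.sqrt t)⁻¹ : ℝ) + (Real.sqrt t : ℝ))) ^ (2 * l) := by
  have htC : (t : ℂ) ≠ 0 := by exact_mod_cast ht.ne'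
  set a := Real.sqrt t with ha_def
  have ha : 0 < a := Real.sqrt_pos.mpr ht
  have haC : (a : ℂ) ≠ 0 := by exact_mod_cast ha.ne'
  have ha2 : a ^ 2 = t := Real.sq_sqrt ht.le
  have ha2C : (a : ℂ) ^ 2 = (t : ℂ) := by exact_mod_cast ha2
  have hb : 0 < 2 * π * t := by positivity
  set c : ℂ := Complex.I * (1 + 1 / t) with hc
  set J : ℂ := ∫ x : ℝ, Complex.exp (-2 * π * (x : ℂ) ^ 2) *
      ((x : ℂ) + Complex.I * (((a⁻¹ : ℝ) : ℂ) + ((a : ℝ) : ℂ))) ^ (2 * l) with hJ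
  have step1 : Pfun l t =
      (t : ℂ) ^ ((1 : ℂ) / 2 + l) * ((-1 : ℂ) ^ l * AI (2 * π * t) (-(Complex.I / t)) c (2 * l)) := by
    unfold Pfun AI
    congr 1
    rw [← integral_const_mul]
    congr 1
    funext y
    unfold gI
    have e1 : (-(((2 * π * t : ℝ)) : ℂ)) * ((y : ℂ) + -(Complex.I / t)) ^ 2 =
        -2 * π * t * ((y : ℂ) - Complex.I / t) ^ 2 := by push_cast; ring
    have e2 : (y : ℂ) + -(Complex.I / t) + c = (y : ℂ) + Complex.I := by
      rw [hc]; field_simp; ring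
    rw [e1, e2]
    have e3 : Complex.I * (y : ℂ) - 1 = Complex.I * ((y : ℂ) + Complex.I) := by
      rw [mul_add, Complex.I_mul_I]; ring
    rw [e3, mul_pow, pow_mul, Complex.I_sq]
    ring
  have step2 : AI (2 * π * t) (-(Complex.I / t)) c (2 * l) = AI (2 * π * t) 0 c (2 * l) :=
    gI_indep hb c (2 * l) _
  -- scaling
  have hscale : AI (2 * π * t) 0 c (2 * l) = (a⁻¹ : ℝ) • ((((a : ℂ))⁻¹) ^ (2 * l) * J) := by
    have h := MeasureTheory.Measure.integral_comp_mul_left (gI (2 * π * t) 0 c (2 * l)) a⁻¹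
    rw [inv_inv, abs_of_pos ha] at h
    have h2 : AI (2 * π * t) 0 c (2 * l) =
        (a⁻¹ : ℝ) • ∫ x : ℝ, gI (2 * π * t) 0 c (2 * l) (a⁻¹ * x) := by
      rw [h, smul_smul, inv_mul_cancel₀ ha.ne', one_smul]; rfl
    rw [h2]
    congr 1
    rw [← integral_const_mul]
    congr 1
    funext x
    unfold gI
    have hexp : (-(((2 * π * t : ℝ)) : ℂ)) * ((((a⁻¹ * x : ℝ) : ℂ)) + 0) ^ 2 = -2 * π * (x : ℂ) ^ 2 := by
      push_cast
      rw [← ha2C]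
      field_simp
      ring
    have hpoly : ((( a⁻¹ * x : ℝ) : ℂ)) + 0 + c =
        ((a : ℂ))⁻¹ * ((x : ℂ) + Complex.I * (((a⁻¹ : ℝ) : ℂ) + ((a : ℝ) : ℂ))) := by
      rw [hc, ← ha2C]
      push_cast
      field_simp
      ring
    rw [hexp, hpoly, mul_pow]
    ring
  have htarget : (∫ y : ℝ, Complex.exp (-2 * π * y ^ 2) *
      (Complex.I * y - (((a)⁻¹ : ℝ) + ((a : ℝ)))) ^ (2 * l)) = (-1 : ℂ) ^ l * J := by
    rw [hJ, ← integral_const_mul]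
    congr 1
    funext y
    have e3 : Complex.I * (y : ℂ) - ((((a⁻¹ : ℝ)) : ℂ) + ((a : ℝ) : ℂ)) =
        Complex.I * ((y : ℂ) + Complex.I * (((a⁻¹ : ℝ) : ℂ) + ((a : ℝ) : ℂ))) := by
      rw [mul_add, ← mul_assoc, Complex.I_mul_I]; ring
    rw [e3, mul_pow, pow_mul, Complex.I_sq]
    ring
  have hcpow : (t : ℂ) ^ ((1 : ℂ) / 2 + l) = (a : ℂ) * (a : ℂ) ^ (2 * l) := by
    rw [Complex.cpow_add _ _ htC, Complex.cpow_natCast]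
    congr 1
    · rw [show ((1 : ℂ) / 2) = (((1 / 2 : ℝ)) : ℂ) by norm_num,
        ← Complex.ofReal_cpow ht.le]
      congr 1
      rw [ha_def, Real.sqrt_eq_rpow]
    · rw [← ha2C, ← pow_mul]
  rw [step1, step2, hscale, htarget, hcpow, Complex.real_smul]
  push_cast
  field_simp
  rw [← mul_pow, mul_one_div_cancel haC, one_pow, one_mul]

/-- For every integer `l ≥ 0` and `t > 0`,
`P(t) = ∫_ℝ e^{-2πy²} (iy - (t^{-1/2} + t^{1/2}))^{2l} dy`, and in particular
`P(t) = P(1/t)`. -/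
theorem stmt_7 (l : ℕ) (t : ℝ) (ht : 0 < t) :
    Pfun l t = (∫ y : ℝ,
        Complex.exp (-2 * π * y ^ 2) *
          (Complex.I * y - (((Real.sqrt t)⁻¹ : ℝ) + (Real.sqrt t : ℝ))) ^ (2 * l)) ∧
    Pfun l t = Pfun l (1 / t) := by
  have ht' : (0 : ℝ) < 1 / t := by positivity
  refine ⟨Pfun_eq l ht, ?_⟩
  rw [Pfun_eq l ht, Pfun_eq l ht']
  rw [show Real.sqrt (1 / t) = (Real.sqrt t)⁻¹ by rw [one_div, Real.sqrt_inv], inv_inv]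
  congr 1
  funext y
  ring
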